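/- Let q be a prime power and let a, b ∈ F_{q^2}. Then there exists m ∈ F_{q^2} such that the line Y = m(X - a) + b meets the Hermitian curve X^{q+1} = Y^q + Y in exactly q+1 distinct F_{q^2}-rational points; equivalently, the polynomial X^{q+1} - m^q X^q - m X - m a - m^q a^q - b - b^q has q+1 distinct roots in F_{q^2}. -/

import Mathlib

open scoped Classical
open Polynomial

theorem stmt11 (p k q : ℕ) (hp : p.Prime) (hk : 0 < k) (hq : q = p ^ k)
    (F : Type*) [Field F] [Fintype F] (hF : Fintype.card F = q ^ 2)
    (a b : F) :
    ∃ m : F,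
      (X ^ (q + 1) - C (m ^ q) * X ^ q - C m * X
        - C (m * a) - C (m ^ q * a ^ q) - C b - C (b ^ q) : F[X]).roots.toFinset.card
        = q + 1 := by
  haveI : Fact p.Prime := ⟨hp⟩
  have hq2 : 2 ≤ q := by
    rw [hq]
    calc 2 = 2 ^ 1 := rfl
    _ ≤ p ^ k := Nat.pow_le_pow_left hp.two_le k |>.trans' (Nat.pow_le_pow_right (by norm_num) hk) |>.trans (le_refl _)
  have hq0 : 0 < q := by omega
  -- characteristic
  haveI hcharF : CharP F p := by
    obtain ⟨n, hpr, hcard⟩ := FiniteField.card F (ringChar F)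
    have h1 : ringChar F ∣ q ^ 2 := by
      rw [← hF, hcard]
      exact dvd_pow_self _ n.pos.ne'
    have h2 : ringChar F ∣ p := hpr.dvd_of_dvd_pow (by rwa [hq, ← pow_mul] at h1)
    have h3 : ringChar F = p := (Nat.prime_dvd_prime_iff_eq hpr hp).mp h2
    exact h3 ▸ ringChar.charP F
  have hx2 : ∀ x : F, x ^ (q * q) = x := by
    intro x
    have := FiniteField.pow_card x
    rwa [hF, pow_two] at this
  have hfrob : ∀ x y : F, (x + y) ^ q = x ^ q + y ^ q := by
    intro x y; rw [hq]; exact add_pow_char_pow x y p k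
  -- choose m with d ≠ 0
  obtain ⟨m, hm⟩ : ∃ m : F,
      m ^ (q + 1) + m * a + m ^ q * a ^ q + b + b ^ q ≠ 0 := by
    set P : F[X] := X ^ (q + 1) + C a * X + C (a ^ q) * X ^ q + C (b + b ^ q) with hP
    have hPm : P.Monic := by
      rw [hP]
      monicity!
      all_goals try (intro h; exact absurd h (by omega))
    have hPdeg : P.natDegree ≤ q + 1 := by
      rw [hP]; compute_degree
    obtain ⟨m, hm⟩ := P.exists_eval_ne_zero_of_natDegree_lt_card hPm.ne_zero
      (by
        rw [Cardinal.mk_fintype, hF]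
        have h2 : P.natDegree < q ^ 2 := lt_of_le_of_lt hPdeg (by nlinarith)
        exact_mod_cast h2)
    refine ⟨m, fun h => hm ?_⟩
    rw [hP]
    simp only [eval_add, eval_mul, eval_pow, eval_X, eval_C]
    rw [← h]; ring
  set d : F := m ^ (q + 1) + m * a + m ^ q * a ^ q + b + b ^ q with hd
  have hd0 : d ≠ 0 := hm
  have hdq : d ^ q = d := by
    rw [hd, hfrob, hfrob, hfrob, hfrob, mul_pow, mul_pow, ← pow_mul, ← pow_mul, ← pow_mul,
      ← pow_mul, show (q + 1) * q = q * q + q by ring, pow_add]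
    simp only [hx2]
    ring
  -- units group
  obtain ⟨g, hg⟩ := IsCyclic.exists_generator (α := Fˣ)
  have hcardU : Fintype.card Fˣ = q ^ 2 - 1 := by rw [Fintype.card_units, hF]
  have horder : orderOf g = q ^ 2 - 1 := by
    rw [orderOf_eq_card_of_forall_mem_zpowers hg, Nat.card_eq_fintype_card, hcardU]
  have hfactor : (q + 1) * (q - 1) = q ^ 2 - 1 := by
    refine Nat.eq_sub_of_add_eq ?_
    obtain ⟨r, hr⟩ : ∃ r, q = r + 1 := ⟨q - 1, by omega⟩
    subst hr
    simp only [Nat.add_sub_cancel]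
    ring
  set du : Fˣ := Units.mk0 d hd0 with hdu
  have hduq : du ^ (q - 1) = 1 := by
    have h1 : du ^ q = du := by
      ext; push_cast [hdu]; exact hdq
    have h2 : du ^ (q - 1) * du = 1 * du := by
      rw [one_mul, ← pow_succ, Nat.sub_add_cancel (by omega), h1]
    exact mul_right_cancel h2
  obtain ⟨t, ht⟩ : ∃ t : ℕ, g ^ t = du := by
    have := hg du
    rwa [← (isOfFinOrder_of_finite g).mem_powers_iff_mem_zpowers, Submonoid.mem_powers_iff] at this
  have hdvd : (q ^ 2 - 1) ∣ t * (q - 1) := by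
    rw [← horder]
    apply orderOf_dvd_of_pow_eq_one
    rw [pow_mul, ht, hduq]
  obtain ⟨s, hs⟩ := hdvd
  have hts : t = (q + 1) * s := by
    have h1 : t * (q - 1) = ((q + 1) * s) * (q - 1) := by
      rw [hs, ← hfactor]; ring
    exact Nat.eq_of_mul_eq_mul_right (by omega) h1
  -- y₀ with y₀ ^ (q+1) = d
  set y₀ : F := ((g ^ s : Fˣ) : F) with hy₀
  have hy₀0 : y₀ ≠ 0 := Units.ne_zero _
  have hy₀pow : y₀ ^ (q + 1) = d := by
    rw [hy₀, ← Units.val_pow_eq_pow_val, ← pow_mul, mul_comm s (q+1), ← hts, ht, hdu]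
    rfl
  -- primitive (q+1)-th root of unity
  have hζ : IsPrimitiveRoot ((g ^ (q - 1) : Fˣ) : F) (q + 1) := by
    rw [IsPrimitiveRoot.coe_units_iff]
    have ho : orderOf (g ^ (q - 1)) = q + 1 := by
      rw [orderOf_pow, horder, Nat.gcd_eq_right ⟨q + 1, by rw [← hfactor]; ring⟩,
        ← hfactor, Nat.mul_div_cancel _ (by omega)]
    exact ho ▸ IsPrimitiveRoot.orderOf _
  have hμcard : (nthRootsFinset (q + 1) (1 : F)).card = q + 1 := hζ.card_nthRootsFinset
  -- the polynomial
  refine ⟨m, ?_⟩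
  set f : F[X] := X ^ (q + 1) - C (m ^ q) * X ^ q - C m * X
        - C (m * a) - C (m ^ q * a ^ q) - C b - C (b ^ q) with hf
  have hsub : ∀ x y : F[X], (x - y) ^ q = x ^ q - y ^ q := by
    intro x y; rw [hq]; exact sub_pow_char_pow x y k (p := p)
  have hCfrob : ((X : F[X]) - C (m ^ q)) ^ q = X ^ q - C m := by
    rw [hsub, ← C_pow, ← pow_mul, hx2]
  have hfeq : f = (X - C (m ^ q)) ^ (q + 1) - C d := by
    rw [hf, hd, pow_succ (X - C (m ^ q)), hCfrob]
    simp only [map_add, map_mul, map_pow]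
    ring
  have hf0 : f ≠ 0 := by
    intro h
    have : f.eval (m ^ q) = 0 := by rw [h, eval_zero]
    rw [hfeq] at this
    simp only [eval_sub, eval_pow, eval_X, eval_C, sub_self, zero_pow (Nat.succ_ne_zero q),
      zero_sub, neg_eq_zero] at this
    exact hd0 this
  have hroot : ∀ x : F, f.eval x = 0 ↔ (x - m ^ q) ^ (q + 1) = d := by
    intro x
    rw [hfeq]
    simp only [eval_sub, eval_pow, eval_X, eval_C, sub_eq_zero]
  have himg : f.roots.toFinset = (nthRootsFinset (q + 1) (1 : F)).image (fun z => m ^ q + y₀ * z) := by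
    ext x
    simp only [Multiset.mem_toFinset, mem_roots hf0, IsRoot.def, hroot, Finset.mem_image]
    constructor
    · intro hx
      refine ⟨(x - m ^ q) / y₀, ?_, ?_⟩
      · rw [mem_nthRootsFinset (by omega), div_pow, hx, hy₀pow, div_self hd0]
      · field_simp
        ring
    · rintro ⟨z, hz, rfl⟩
      rw [mem_nthRootsFinset (by omega)] at hz
      rw [add_sub_cancel_left, mul_pow, hz, mul_one, hy₀pow]
  rw [himg, Finset.card_image_of_injective _ (fun z w h => by
      simpa [hy₀0] using h), hμcard]
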